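/- arXiv:2009.12718 — 3 statements merged into one kernel-verified Lean document; each statement's English description precedes it below -/
import Mathlib

section
/- Let b > 0, Δ > 0, d ≥ 0 be real numbers and let g be a real number with g ≥ -2Δ. Then exp(-exp(-(g + 2d)/b)) ≤ exp((2/b) · exp(2Δ/b) · d) · exp(-exp(-g/b)). -/
theorem stmt_0 (b Δ d g : ℝ) (hb : 0 < b) (hΔ : 0 < Δ) (hd : 0 ≤ d)
    (hg : -(2 * Δ) ≤ g) :
    Real.exp (-Real.exp (-((g + 2 * d) / b))) ≤
      Real.exp ((2 / b) * Real.exp (2 * Δ / b) * d) *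
        Real.exp (-Real.exp (-(g / b))) := by
  rw [← Real.exp_add, Real.exp_le_exp]
  have h1 : Real.exp (-(g / b)) ≤ Real.exp (2 * Δ / b) := by
    apply Real.exp_le_exp.2
    rw [← neg_div, div_le_div_iff₀ hb hb]
    nlinarith
  have h2 : -(2 * d / b) + 1 ≤ Real.exp (-(2 * d / b)) := Real.add_one_le_exp _
  have h3 : Real.exp (-((g + 2 * d) / b)) =
      Real.exp (-(g / b)) * Real.exp (-(2 * d / b)) := by
    rw [← Real.exp_add]; ring_nf
  have h4 : 0 < Real.exp (-(g / b)) := Real.exp_pos _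
  have h5 : 0 ≤ 2 * d / b := by positivity
  rw [h3]
  have key : Real.exp (-(g / b)) * (1 - Real.exp (-(2 * d / b))) ≤
      Real.exp (2 * Δ / b) * (2 * d / b) := by
    calc Real.exp (-(g / b)) * (1 - Real.exp (-(2 * d / b)))
        ≤ Real.exp (-(g / b)) * (2 * d / b) := by nlinarith
      _ ≤ Real.exp (2 * Δ / b) * (2 * d / b) := by nlinarith
  have heq : 2 / b * Real.exp (2 * Δ / b) * d = Real.exp (2 * Δ / b) * (2 * d / b) := by
    field_simp
  nlinarith
end

section
/- Let Δ > 0, Δ₀ > 0, λ > 0 be real numbers, let n be a real number with n ≥ 1, let A and ε be real numbers with A = (2 + log n + λ)/Δ₀, and suppose w > 0 satisfies w · exp(w) = (2Δ/3) · (ε - A). Set b = 2Δ/w and assume 0 < b ≤ Δ₀. Then for every real d with d ≥ Δ₀: (1/d) · log(2·n·exp(exp(2Δ/b) + λ)) + (2/b) · exp(2Δ/b) ≤ ε. -/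
theorem stmt_8 (Δ Δ₀ lam n A ε w : ℝ) (hΔ : 0 < Δ) (hΔ₀ : 0 < Δ₀)
    (hlam : 0 < lam) (hn : 1 ≤ n) (hA : A = (2 + Real.log n + lam) / Δ₀)
    (hw : 0 < w) (hW : w * Real.exp w = (2 * Δ / 3) * (ε - A)) (b : ℝ)
    (hb : b = 2 * Δ / w) (hbpos : 0 < b) (hble : b ≤ Δ₀) :
    ∀ d : ℝ, Δ₀ ≤ d →
      (1 / d) * Real.log (2 * n * Real.exp (Real.exp (2 * Δ / b) + lam)) +
        (2 / b) * Real.exp (2 * Δ / b) ≤ ε := by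
  intro d hd
  have hd0 : 0 < d := lt_of_lt_of_le hΔ₀ hd
  have h2Δb : 2 * Δ / b = w := by
    rw [hb]; field_simp
  rw [h2Δb]
  set E := Real.exp w with hE
  have hEpos : 0 < E := Real.exp_pos w
  have hLn : 0 ≤ Real.log n := Real.log_nonneg hn
  have hεA : 0 < ε - A := by nlinarith [mul_pos hw hEpos]
  have hbw : b * w = 2 * Δ := by rw [hb]; field_simp
  have hEb : E * 3 = b * (ε - A) := by
    have h : (E * 3) * w = (b * (ε - A)) * w := by nlinarith
    exact mul_right_cancel₀ (ne_of_gt hw) h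
  have hlog : Real.log (2 * n * Real.exp (E + lam))
      = Real.log 2 + Real.log n + (E + lam) := by
    rw [Real.log_mul (by positivity) (Real.exp_ne_zero _), Real.log_mul (by norm_num)
      (by positivity), Real.log_exp]
  rw [hlog]
  have hl2 : Real.log 2 ≤ 2 := by
    have := Real.log_two_lt_d9; linarith
  have hl2' : 0 ≤ Real.log 2 := Real.log_nonneg (by norm_num)
  have hS : 0 ≤ Real.log 2 + Real.log n + (E + lam) := by linarith
  have h1 : (1 / d) * (Real.log 2 + Real.log n + (E + lam))
      ≤ (1 / Δ₀) * (Real.log 2 + Real.log n + (E + lam)) :=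
    mul_le_mul_of_nonneg_right (one_div_le_one_div_of_le hΔ₀ hd) hS
  have h2 : (2 / b) * E = 2 * (ε - A) / 3 := by
    field_simp
    linarith [hEb]
  have h3 : (1 / Δ₀) * (Real.log 2 + Real.log n + (E + lam)) ≤ A + (ε - A) / 3 := by
    rw [one_div, inv_mul_le_iff₀ hΔ₀]
    have hAΔ : A * Δ₀ = 2 + Real.log n + lam := by
      rw [hA]; field_simp
    have hEle : E * 3 ≤ Δ₀ * (ε - A) :=
      hEb ▸ mul_le_mul_of_nonneg_right hble (le_of_lt hεA) |>.trans_eq rfl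
    nlinarith
  linarith
end

section
/- Let Δ > 0, Δ₀ > 0, λ > 0 be real numbers, let n be a real number with n ≥ 1, let A and ε be real numbers with A = (2 + log n + λ)/Δ₀ and (Δ₀/3)·(ε - A) > 1. Set b = 2Δ / log((Δ₀/3)·(ε - A)) and assume b ≥ Δ₀. Then for every real d with d ≥ Δ₀: (1/d) · log(2·n·exp(exp(2Δ/b) + λ)) + (2/b) · exp(2Δ/b) ≤ ε. -/
theorem stmt_9 (Δ Δ₀ lam n A ε : ℝ) (hΔ : 0 < Δ) (hΔ₀ : 0 < Δ₀)
    (hlam : 0 < lam) (hn : 1 ≤ n) (hA : A = (2 + Real.log n + lam) / Δ₀)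
    (harg : 1 < (Δ₀ / 3) * (ε - A)) (b : ℝ)
    (hb : b = 2 * Δ / Real.log ((Δ₀ / 3) * (ε - A))) (hbge : Δ₀ ≤ b) :
    ∀ d : ℝ, Δ₀ ≤ d →
      (1 / d) * Real.log (2 * n * Real.exp (Real.exp (2 * Δ / b) + lam)) +
        (2 / b) * Real.exp (2 * Δ / b) ≤ ε := by
  intro d hd
  have hd0 : 0 < d := lt_of_lt_of_le hΔ₀ hd
  set E := (Δ₀ / 3) * (ε - A) with hE
  have hE1 : 1 < E := harg
  have hE0 : 0 < E := by linarith
  have hL : 0 < Real.log E := Real.log_pos hE1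
  have hb0 : 0 < b := lt_of_lt_of_le hΔ₀ hbge
  have h2Δb : 2 * Δ / b = Real.log E := by
    rw [hb]; field_simp
  have hexp : Real.exp (2 * Δ / b) = E := by rw [h2Δb, Real.exp_log hE0]
  rw [hexp]
  have hlogn : 0 ≤ Real.log n := Real.log_nonneg hn
  have hn0 : (0:ℝ) < n := by linarith
  have hlog : Real.log (2 * n * Real.exp (E + lam)) = Real.log 2 + Real.log n + (E + lam) := by
    rw [Real.log_mul (by positivity) (Real.exp_ne_zero _),
      Real.log_mul two_ne_zero (by positivity), Real.log_exp]
  rw [hlog]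
  have hlog2a : 0 ≤ Real.log 2 := Real.log_nonneg one_le_two
  have hlog2 : Real.log 2 ≤ 2 := by
    have := Real.log_le_sub_one_of_pos (by norm_num : (0:ℝ) < 2); linarith
  have h1 : (1/d) * (Real.log 2 + Real.log n + (E + lam)) ≤
      (1/Δ₀) * (2 + Real.log n + (E + lam)) := by
    apply mul_le_mul (one_div_le_one_div_of_le hΔ₀ hd) (by linarith) (by linarith)
      (by positivity)
  have h2 : (2/b) * E ≤ (2/Δ₀) * E := by
    apply mul_le_mul_of_nonneg_right _ (le_of_lt hE0)
    apply div_le_div_of_nonneg_left (by norm_num) hΔ₀ hbge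
  have hfin : (1/Δ₀) * (2 + Real.log n + (E + lam)) + (2/Δ₀) * E = ε := by
    rw [hE, hA]; field_simp; ring
  linarith
end
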